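/- Let Γ=(G,σ) be a signed graph on n vertices. For every real q≥1 and every 1≤k≤n: L_k(Γ) = min_{B∈F_k(S_q)} max_{g∈B} R^σ_{q,∞}(g), where R^σ_{q,∞}(g) = (Σ_{{i,j}∈E} w_{ij}·(max{−g(i)σ_{ij}g(j), 0})^{q/2}) / (Σ_{i∈V} μ_i|g(i)|^q) for nonzero g:V→ℝ. -/

import Mathlib

open Filter Topology Polynomial
open scoped Classical

noncomputable section

variable {V : Type} [Fintype V] [DecidableEq V]

/-- Sum of a (symmetric) summand over the unordered edges of `G`. -/
def sgEdgeSum (G : SimpleGraph V) (F : V → V → ℝ) : ℝ :=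
  (∑ i : V, ∑ j : V, if G.Adj i j then F i j else 0) / 2

/-- The Rayleigh quotient `R_p^σ` of the signed graph `p`-Laplacian with
edge weight `w`, signature `sgn`, vertex measure `μ` and potential `κ`. -/
def sgRayleigh (G : SimpleGraph V) (w sgn : V → V → ℝ) (μ κ : V → ℝ)
    (p : ℝ) (f : V → ℝ) : ℝ :=
  (sgEdgeSum G (fun i j => w i j * |f i - sgn i j * f j| ^ p) +
      ∑ i : V, κ i * |f i| ^ p) /
    ∑ i : V, μ i * |f i| ^ p

/-- The unit sphere `S_p` of `ℓ^p(μ)`. -/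
def pSphere (μ : V → ℝ) (p : ℝ) : Set (V → ℝ) :=
  {f | ∑ i : V, μ i * |f i| ^ p = 1}

/-- There is an odd continuous map from `B` into `ℝ^m ∖ {0}`. -/
def hasOddMapInto (B : Set (V → ℝ)) (m : ℕ) : Prop :=
  ∃ h : (V → ℝ) → (Fin m → ℝ),
    ContinuousOn h B ∧ (∀ x ∈ B, h x ≠ 0) ∧ (∀ x ∈ B, h (-x) = -(h x))

/-- The Krasnoselskii genus of `B` is at least `k`. -/
def genusGe (B : Set (V → ℝ)) (k : ℕ) : Prop :=
  ∀ m, m < k → ¬ hasOddMapInto B m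

/-- The family `F_k(S_p)` of closed symmetric subsets of the sphere `S_p`
with Krasnoselskii genus at least `k`. -/
def genusFamily (μ : V → ℝ) (p : ℝ) (k : ℕ) : Set (Set (V → ℝ)) :=
  {B | B ⊆ pSphere μ p ∧ IsClosed B ∧ (∀ x ∈ B, -x ∈ B) ∧ genusGe B k}

/-- The `k`-th variational eigenvalue `λ_k^{(p)}` of the signed graph `p`-Laplacian. -/
def varEig (G : SimpleGraph V) (w sgn : V → V → ℝ) (μ κ : V → ℝ)
    (p : ℝ) (k : ℕ) : ℝ :=
  sInf ((fun B => sSup (sgRayleigh G w sgn μ κ p '' B)) '' genusFamily μ p k)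

/-- The `k`-th smallest real root (1-indexed, counted with multiplicity) of the
characteristic polynomial of `A`; for a matrix with real spectrum this is the
`k`-th eigenvalue `λ_k(A)` in the ordering `λ_1 ≤ … ≤ λ_n`. -/
def eigval {m : Type} [Fintype m] [DecidableEq m] (A : Matrix m m ℝ) (k : ℕ) : ℝ :=
  (Multiset.sort A.charpoly.roots (· ≤ ·)).getD (k - 1) 0

/-- The normalized adjacency matrix `A^μ_{-Γ}` of the negation of the signed graph
`(H, sgn)` with edge weight `w` and vertex measure `μ`. -/
def negAdj (H : SimpleGraph V) (w sgn : V → V → ℝ) (μ : V → ℝ) : Matrix V V ℝ :=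
  fun i j => if H.Adj i j then -(sgn i j) * w i j / μ i else 0

/-- The normalized adjacency matrix `A^μ_{-Γ₀}` of the negation of the subgraph of
`(H, sgn)` with vertex set `s`, with restricted edge weight and vertex measure. -/
def negAdjSub (H : SimpleGraph V) (s : Finset V) (w sgn : V → V → ℝ) (μ : V → ℝ) :
    Matrix {x // x ∈ s} {x // x ∈ s} ℝ :=
  fun i j => if H.Adj ↑i ↑j then -(sgn ↑i ↑j) * w ↑i ↑j / μ ↑i else 0

/-- The subgraph of `G` induced on the vertex set `s`. -/
def inducedGraph (G : SimpleGraph V) (s : Finset V) : SimpleGraph {x // x ∈ s} where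
  Adj i j := G.Adj ↑i ↑j
  symm := ⟨fun _ _ h => G.adj_symm h⟩
  loopless := ⟨fun i h => G.irrefl (v := ↑i) h⟩

/-- `G` has an edge cover of cardinality `m`. -/
def edgeCoverCard {α : Type} (G : SimpleGraph α) (m : ℕ) : Prop :=
  ∃ C : Finset (Sym2 α), (C : Set (Sym2 α)) ⊆ G.edgeSet ∧
    (∀ v : α, ∃ e ∈ C, v ∈ e) ∧ C.card = m

/-- The cut-off Rayleigh-type quotient `R^σ_{q,∞}`. -/
def cutRayleigh (G : SimpleGraph V) (w sgn : V → V → ℝ) (μ : V → ℝ)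
    (q : ℝ) (g : V → ℝ) : ℝ :=
  sgEdgeSum G (fun i j => w i j * (max (-(g i * sgn i j * g j)) 0) ^ (q / 2)) /
    ∑ i : V, μ i * |g i| ^ q

/-! ### Auxiliary scalar lemmas -/

/-- Signed power `sign(a)·|a|^t`. -/
def sgnRpow (t a : ℝ) : ℝ := if a ≤ 0 then -(|a| ^ t) else |a| ^ t

lemma abs_sgnRpow (t a : ℝ) : |sgnRpow t a| = |a| ^ t := by
  unfold sgnRpow
  split_ifs with h
  · rw [abs_neg, abs_of_nonneg (Real.rpow_nonneg (abs_nonneg a) t)]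
  · rw [abs_of_nonneg (Real.rpow_nonneg (abs_nonneg a) t)]

lemma sgnRpow_neg (t : ℝ) (ht : t ≠ 0) (a : ℝ) : sgnRpow t (-a) = -sgnRpow t a := by
  unfold sgnRpow
  rcases lt_trichotomy a 0 with h | h | h
  · rw [if_neg (by simp; linarith), if_pos h.le, abs_neg, neg_neg]
  · subst h
    simp [Real.zero_rpow ht]
  · rw [if_pos (by linarith), if_neg (not_le.mpr h), abs_neg]

lemma sgnRpow_mul (t : ℝ) (ht : t ≠ 0) (a b : ℝ) :
    sgnRpow t (a * b) = sgnRpow t a * sgnRpow t b := by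
  have habs : ∀ x y : ℝ, |x * y| ^ t = |x| ^ t * |y| ^ t := fun x y => by
    rw [abs_mul, Real.mul_rpow (abs_nonneg x) (abs_nonneg y)]
  rcases lt_trichotomy a 0 with ha | ha | ha
  · rcases lt_trichotomy b 0 with hb | hb | hb
    · have hab : 0 < a * b := mul_pos_of_neg_of_neg ha hb
      simp only [sgnRpow, if_neg (not_le.mpr hab), if_pos ha.le, if_pos hb.le, habs]
      ring
    · subst hb; simp [sgnRpow, Real.zero_rpow ht]
    · have hab : a * b < 0 := mul_neg_of_neg_of_pos ha hb
      simp only [sgnRpow, if_pos hab.le, if_pos ha.le, if_neg (not_le.mpr hb), habs]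
      ring
  · subst ha; simp [sgnRpow, Real.zero_rpow ht]
  · rcases lt_trichotomy b 0 with hb | hb | hb
    · have hab : a * b < 0 := mul_neg_of_pos_of_neg ha hb
      simp only [sgnRpow, if_pos hab.le, if_neg (not_le.mpr ha), if_pos hb.le, habs]
      ring
    · subst hb; simp [sgnRpow, Real.zero_rpow ht]
    · have hab : 0 < a * b := mul_pos ha hb
      simp only [sgnRpow, if_neg (not_le.mpr hab), if_neg (not_le.mpr ha),
        if_neg (not_le.mpr hb), habs]

lemma sgnRpow_sgnRpow (s t : ℝ) (hs : 0 < s) (a : ℝ) :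
    sgnRpow t (sgnRpow s a) = sgnRpow (s * t) a := by
  rcases lt_trichotomy a 0 with ha | ha | ha
  · have h1 : sgnRpow s a = -(|a| ^ s) := if_pos ha.le
    have h2 : -(|a| ^ s) ≤ 0 := neg_nonpos.mpr (Real.rpow_nonneg (abs_nonneg a) s)
    have h3 : |(-(|a| ^ s))| = |a| ^ s := by
      rw [abs_neg, abs_of_nonneg (Real.rpow_nonneg (abs_nonneg a) s)]
    rw [h1]
    show (if -(|a| ^ s) ≤ 0 then -(|(-(|a| ^ s))| ^ t) else |(-(|a| ^ s))| ^ t) = _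
    rw [if_pos h2, h3, ← Real.rpow_mul (abs_nonneg a)]
    unfold sgnRpow
    rw [if_pos ha.le]
  · subst ha
    rcases eq_or_ne t 0 with ht | ht
    · subst ht
      simp [sgnRpow, Real.zero_rpow (ne_of_gt hs), mul_zero]
    · simp [sgnRpow, Real.zero_rpow (ne_of_gt hs), Real.zero_rpow ht,
        Real.zero_rpow (mul_ne_zero (ne_of_gt hs) ht)]
  · have h1 : sgnRpow s a = |a| ^ s := if_neg (not_le.mpr ha)
    have h2 : ¬(|a| ^ s ≤ 0) :=
      not_le.mpr (Real.rpow_pos_of_pos (abs_pos.mpr (ne_of_gt ha)) s)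
    rw [h1]
    show (if |a| ^ s ≤ 0 then -((abs (|a| ^ s)) ^ t) else (abs (|a| ^ s)) ^ t) = _
    rw [if_neg h2, abs_of_nonneg (Real.rpow_nonneg (abs_nonneg a) s),
      ← Real.rpow_mul (abs_nonneg a)]
    unfold sgnRpow
    rw [if_neg (not_le.mpr ha)]

lemma sgnRpow_one (a : ℝ) : sgnRpow 1 a = a := by
  unfold sgnRpow
  split_ifs with h
  · rw [Real.rpow_one, abs_of_nonpos h, neg_neg]
  · rw [Real.rpow_one, abs_of_pos (not_le.mp h)]

lemma continuous_sgnRpow (t : ℝ) (ht : 0 < t) : Continuous (sgnRpow t) := by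
  have h1 : Continuous fun a : ℝ => -(|a| ^ t) :=
    (continuous_abs.rpow_const fun _ => Or.inr ht.le).neg
  have h2 : Continuous fun a : ℝ => |a| ^ t :=
    continuous_abs.rpow_const fun _ => Or.inr ht.le
  exact Continuous.if_le h1 h2 continuous_id continuous_const
    (fun x hx => by simp [hx, Real.zero_rpow (ne_of_gt ht)])

lemma sgnRpow_nonneg (t : ℝ) (ht : t ≠ 0) {a : ℝ} (h : 0 ≤ a) : 0 ≤ sgnRpow t a := by
  rcases eq_or_lt_of_le h with h0 | h0
  · simp [sgnRpow, ← h0, Real.zero_rpow ht]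
  · unfold sgnRpow
    rw [if_neg (not_le.mpr h0)]
    exact Real.rpow_nonneg (abs_nonneg a) t

lemma sgnRpow_neg_of_neg (t : ℝ) {a : ℝ} (h : a < 0) : sgnRpow t a < 0 := by
  unfold sgnRpow
  rw [if_pos h.le]
  have : 0 < |a| ^ t := Real.rpow_pos_of_pos (abs_pos.mpr (ne_of_lt h)) t
  linarith

lemma max_sgnRpow (t : ℝ) (ht : t ≠ 0) (a : ℝ) :
    max (sgnRpow t a) 0 = (max a 0) ^ t := by
  rcases le_or_gt a 0 with h | h
  · rw [max_eq_right h, Real.zero_rpow ht]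
    unfold sgnRpow
    rw [if_pos h, max_eq_right (neg_nonpos.mpr (Real.rpow_nonneg (abs_nonneg a) t))]
  · rw [max_eq_left h.le]
    unfold sgnRpow
    rw [if_neg (not_le.mpr h), max_eq_left (Real.rpow_nonneg (abs_nonneg a) t),
      abs_of_pos h]

lemma abs_sub_le_max_of_mul_nonneg {x y : ℝ} (h : 0 ≤ x * y) : |x - y| ≤ max |x| |y| := by
  rcases mul_nonneg_iff.mp h with ⟨hx, hy⟩ | ⟨hx, hy⟩
  · rw [abs_sub_le_iff]
    constructor
    · calc x - y ≤ x := by linarith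
        _ ≤ |x| := le_abs_self x
        _ ≤ _ := le_max_left _ _
    · calc y - x ≤ y := by linarith
        _ ≤ |y| := le_abs_self y
        _ ≤ _ := le_max_right _ _
  · rw [abs_sub_le_iff]
    constructor
    · calc x - y ≤ -y := by linarith
        _ ≤ |y| := neg_le_abs y
        _ ≤ _ := le_max_right _ _
    · calc y - x ≤ -x := by linarith
        _ ≤ |x| := neg_le_abs x
        _ ≤ _ := le_max_left _ _

lemma abs_sub_eq_add_of_mul_neg {x y : ℝ} (h : x * y < 0) : |x - y| = |x| + |y| := by
  rcases mul_neg_iff.mp h with ⟨hx, hy⟩ | ⟨hx, hy⟩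
  · rw [abs_of_pos hx, abs_of_neg hy, abs_of_pos (by linarith : (0:ℝ) < x - y)]
    ring
  · rw [abs_of_neg hx, abs_of_pos hy, abs_of_neg (by linarith : x - y < 0)]
    ring

lemma geom_le_arith {x y : ℝ} (hx : 0 ≤ x) (hy : 0 ≤ y) :
    (x * y) ^ ((2:ℝ)⁻¹) ≤ (x + y) / 2 := by
  have h1 : x * y ≤ ((x + y) / 2) ^ (2:ℕ) := by nlinarith [sq_nonneg (x - y)]
  have h2 : (x * y) ^ ((2:ℝ)⁻¹) ≤ (((x + y) / 2) ^ (2:ℕ)) ^ ((2:ℝ)⁻¹) :=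
    Real.rpow_le_rpow (mul_nonneg hx hy) h1 (by norm_num)
  have h3 : (((x + y) / 2) ^ (2:ℕ)) ^ ((2:ℝ)⁻¹) = (x + y) / 2 := by
    rw [← Real.rpow_natCast ((x + y) / 2) 2, ← Real.rpow_mul (by positivity)]
    norm_num
  linarith

lemma coreA {p : ℝ} (hp : 0 < p) (a c : ℝ) :
    (max (-(a * c)) 0) ^ (p / 2) ≤ (|a - c| / 2) ^ p := by
  rcases le_or_gt 0 (a * c) with h | h
  · rw [max_eq_right (neg_nonpos.mpr h), Real.zero_rpow (by positivity)]
    exact Real.rpow_nonneg (by positivity) p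
  · rw [max_eq_left (by linarith : (0:ℝ) ≤ -(a * c))]
    have h1 : -(a * c) = |a| * |c| := by
      rw [← abs_mul, abs_of_neg h]
    rw [h1, abs_sub_eq_add_of_mul_neg h]
    have h2 : (|a| * |c|) ^ (p / 2) = ((|a| * |c|) ^ ((2:ℝ)⁻¹)) ^ p := by
      rw [← Real.rpow_mul (by positivity)]
      ring_nf
    rw [h2]
    exact Real.rpow_le_rpow (Real.rpow_nonneg (by positivity) _)
      (geom_le_arith (abs_nonneg a) (abs_nonneg c)) hp.le

lemma one_add_exp_le {x : ℝ} (h0 : 0 ≤ x) (h1 : x ≤ 2/5) :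
    (1 + Real.exp (-x)) / 2 ≤ Real.exp (-(x/4)) := by
  set y := Real.exp (-(x/4)) with hy
  have hy1 : y ≤ 1 := Real.exp_le_one_iff.mpr (by linarith)
  have hy9 : 9/10 ≤ y := by
    have := Real.add_one_le_exp (-(x/4))
    simp only [hy]
    linarith
  have hx4 : Real.exp (-x) = y ^ (4:ℕ) := by
    rw [hy, ← Real.exp_nat_mul]
    congr 1
    push_cast
    ring
  rw [hx4]
  have key : 0 ≤ (1 - y) * (y^3 + y^2 + y - 1) := mul_nonneg (by linarith) (by nlinarith)
  nlinarith [key]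
/-- Error term `δ(p)` that tends to `0` as `p → ∞`. -/
def errTerm (R p : ℝ) : ℝ :=
  R * ((Real.exp (p ^ (-(2:ℝ)⁻¹)) - 1) + Real.exp (-(p ^ ((4:ℝ)⁻¹)) / 4) + (2:ℝ) ^ (-p))

lemma errTerm_nonneg {R p : ℝ} (hR : 0 ≤ R) (hp : 0 ≤ p) : 0 ≤ errTerm R p := by
  unfold errTerm
  have h1 : 1 ≤ Real.exp (p ^ (-(2:ℝ)⁻¹)) := Real.one_le_exp (Real.rpow_nonneg hp _)
  have h2 : 0 ≤ Real.exp (-(p ^ ((4:ℝ)⁻¹)) / 4) := (Real.exp_pos _).le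
  have h3 : (0:ℝ) ≤ (2:ℝ) ^ (-p) := Real.rpow_nonneg (by norm_num) _
  nlinarith

lemma le_errTerm_two_rpow {R p : ℝ} (hR : 0 ≤ R) (hp : 0 ≤ p) :
    R * (2:ℝ) ^ (-p) ≤ errTerm R p := by
  unfold errTerm
  have h1 : 1 ≤ Real.exp (p ^ (-(2:ℝ)⁻¹)) := Real.one_le_exp (Real.rpow_nonneg hp _)
  have h2 : 0 ≤ Real.exp (-(p ^ ((4:ℝ)⁻¹)) / 4) := (Real.exp_pos _).le
  nlinarith

lemma mul_self_rpow_half {R : ℝ} (hR : 0 ≤ R) : (R * R) ^ ((2:ℝ)⁻¹) = R := by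
  have h : R * R = R ^ (2:ℕ) := by ring
  rw [h, ← Real.rpow_natCast R 2, ← Real.rpow_mul hR]
  norm_num

lemma exp_half_le_two : Real.exp 2⁻¹ ≤ 2 := by
  have h3 : Real.exp 2⁻¹ ^ (2:ℕ) = Real.exp 1 := by
    rw [← Real.exp_nat_mul]
    norm_num
  have h4 : Real.exp 1 < 4 := by
    have h5 := Real.exp_one_lt_d9
    norm_num at h5
    linarith
  nlinarith [Real.exp_pos (2⁻¹ : ℝ), sq_nonneg (Real.exp 2⁻¹ - 2)]

/-- Regime 1 : `a - b` small. -/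
lemma regime1core {p a b : ℝ} (hp0 : 0 < p) (hp1 : 1 ≤ p) (hba : b ≤ a)
    (hL : a - b ≤ p ^ ((4:ℝ)⁻¹)) :
    ((Real.exp (a * p⁻¹) + Real.exp (b * p⁻¹)) / 2) ^ p
      ≤ Real.exp ((a + b) / 2) * Real.exp (p ^ (-(2:ℝ)⁻¹)) := by
  obtain ⟨x, hxdef⟩ : ∃ x, x = Real.exp (a / (2*p)) := ⟨_, rfl⟩
  obtain ⟨y, hydef⟩ : ∃ y, y = Real.exp (b / (2*p)) := ⟨_, rfl⟩
  obtain ⟨z, hz⟩ : ∃ z, z = (a - b) / (2*p) := ⟨_, rfl⟩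
  have hx0 : 0 < x := hxdef ▸ Real.exp_pos _
  have hy0 : 0 < y := hydef ▸ Real.exp_pos _
  have hz0 : 0 ≤ z := hz ▸ div_nonneg (by linarith) (by linarith)
  have hux : Real.exp (a * p⁻¹) = x ^ (2:ℕ) := by
    rw [hxdef, ← Real.exp_nat_mul]
    congr 1
    push_cast
    field_simp
  have hvy : Real.exp (b * p⁻¹) = y ^ (2:ℕ) := by
    rw [hydef, ← Real.exp_nat_mul]
    congr 1
    push_cast
    field_simp
  obtain ⟨D, hD⟩ : ∃ D, D = (x - y)^2 / (2*(x*y)) := ⟨_, rfl⟩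
  have hD0 : 0 ≤ D := hD ▸ by positivity
  have hiden : (x ^ (2:ℕ) + y ^ (2:ℕ)) / 2 = (x*y) * (1 + D) := by
    rw [hD]
    field_simp
    ring
  have hxyp : (x*y) ^ p = Real.exp ((a+b)/2) := by
    rw [hxdef, hydef, ← Real.exp_add, ← Real.exp_mul]
    congr 1
    field_simp
  have h1D : (1 + D) ^ p ≤ Real.exp (D * p) := by
    calc (1 + D) ^ p ≤ (Real.exp D) ^ p :=
          Real.rpow_le_rpow (by positivity)
            (by linarith [Real.add_one_le_exp D]) hp0.le
      _ = Real.exp (D * p) := (Real.exp_mul D p).symm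
  have hyx : y ≤ x := by
    rw [hxdef, hydef]
    exact Real.exp_le_exp.mpr (by gcongr)
  have hxsuby : x - y ≤ x * z := by
    have hdiv : y / x = Real.exp (-z) := by
      rw [hxdef, hydef, ← Real.exp_sub]
      congr 1
      rw [hz]
      field_simp
      ring
    have h2 : 1 - Real.exp (-z) ≤ z := by
      linarith [Real.add_one_le_exp (-z)]
    calc x - y = x * (1 - y / x) := by field_simp
      _ ≤ x * z := mul_le_mul_of_nonneg_left (by rw [hdiv]; exact h2) hx0.le
  have hxy0 : 0 ≤ x - y := by linarith
  have hxdivy : x / y = Real.exp z := by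
    rw [hxdef, hydef, ← Real.exp_sub]
    congr 1
    rw [hz]
    field_simp
  have hDz : D ≤ Real.exp z * z^2 / 2 := by
    have hsq : (x - y)^2 ≤ (x*z)^2 := pow_le_pow_left₀ hxy0 hxsuby 2
    have heq : (x*z)^2 / (2*(x*y)) = (x/y) * z^2 / 2 := by
      field_simp
    calc D ≤ (x*z)^2 / (2*(x*y)) := by
          rw [hD]
          gcongr
      _ = (x/y) * z^2 / 2 := heq
      _ = Real.exp z * z^2 / 2 := by rw [hxdivy]
  have hp14 : p ^ ((4:ℝ)⁻¹) ≤ p := by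
    calc p ^ ((4:ℝ)⁻¹) ≤ p ^ (1:ℝ) :=
          Real.rpow_le_rpow_of_exponent_le hp1 (by norm_num)
      _ = p := Real.rpow_one p
  have hzhalf : z ≤ 2⁻¹ := by
    rw [hz, div_le_iff₀ (by linarith : (0:ℝ) < 2*p)]
    calc a - b ≤ p ^ ((4:ℝ)⁻¹) := hL
      _ ≤ p := hp14
      _ ≤ 2⁻¹ * (2*p) := by linarith
  have hexpz : Real.exp z ≤ 2 :=
    le_trans (Real.exp_le_exp.mpr hzhalf) exp_half_le_two
  have hDz2 : D ≤ z^2 := by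
    have h6 : Real.exp z * z^2 ≤ 2 * z^2 := mul_le_mul_of_nonneg_right hexpz (sq_nonneg z)
    linarith
  have hab2 : (a - b)^2 ≤ p ^ ((2:ℝ)⁻¹) := by
    have h1 : (a-b)^2 ≤ (p ^ ((4:ℝ)⁻¹))^(2:ℕ) := pow_le_pow_left₀ (by linarith) hL 2
    have h2 : (p ^ ((4:ℝ)⁻¹))^(2:ℕ) = p ^ ((2:ℝ)⁻¹) := by
      rw [← Real.rpow_natCast (p ^ ((4:ℝ)⁻¹)) 2, ← Real.rpow_mul hp0.le]
      norm_num
    linarith [h2 ▸ h1]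
  have hDp : D * p ≤ p ^ (-(2:ℝ)⁻¹) := by
    have h1 : D * p ≤ z^2 * p := mul_le_mul_of_nonneg_right hDz2 hp0.le
    have h2 : z^2 * p = (a-b)^2 / (4*p) := by
      rw [hz]
      field_simp
      ring
    have h3 : (a-b)^2 / (4*p) ≤ p ^ ((2:ℝ)⁻¹) / (4*p) := by gcongr
    have h5 : p ^ ((2:ℝ)⁻¹) * p ^ ((2:ℝ)⁻¹) = p := by
      rw [← Real.rpow_add hp0]
      norm_num
    have h4 : p ^ ((2:ℝ)⁻¹) / (4*p) ≤ p ^ (-(2:ℝ)⁻¹) := by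
      have hpos : 0 < p ^ ((2:ℝ)⁻¹) := Real.rpow_pos_of_pos hp0 _
      rw [Real.rpow_neg hp0.le, div_le_iff₀ (by linarith : (0:ℝ) < 4*p)]
      have key : (p ^ ((2:ℝ)⁻¹))⁻¹ * (4*p) = 4 * p ^ ((2:ℝ)⁻¹) := by
        have h6 : (4:ℝ) * p = 4 * (p ^ ((2:ℝ)⁻¹) * p ^ ((2:ℝ)⁻¹)) := by rw [h5]
        rw [h6]
        field_simp
      rw [key]
      linarith
    linarith
  calc ((Real.exp (a * p⁻¹) + Real.exp (b * p⁻¹)) / 2) ^ p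
      = Real.exp ((a+b)/2) * (1 + D) ^ p := by
        rw [hux, hvy, hiden, Real.mul_rpow (by positivity) (by positivity), hxyp]
    _ ≤ Real.exp ((a+b)/2) * Real.exp (D * p) :=
        mul_le_mul_of_nonneg_left h1D (Real.exp_pos _).le
    _ ≤ Real.exp ((a+b)/2) * Real.exp (p ^ (-(2:ℝ)⁻¹)) :=
        mul_le_mul_of_nonneg_left (Real.exp_le_exp.mpr hDp) (Real.exp_pos _).le

/-- Regime 2 : `a - b` large. -/
lemma regime2core {p a b : ℝ} (hp : 16 ≤ p) (hL : p ^ ((4:ℝ)⁻¹) < a - b) :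
    ((Real.exp (a * p⁻¹) + Real.exp (b * p⁻¹)) / 2) ^ p
      ≤ Real.exp a * Real.exp (-(p ^ ((4:ℝ)⁻¹)) / 4) := by
  have hp0 : (0:ℝ) < p := by linarith
  have hL0 : (0:ℝ) ≤ p ^ ((4:ℝ)⁻¹) := Real.rpow_nonneg hp0.le _
  obtain ⟨s, hs⟩ : ∃ s, s = (a - b) / p := ⟨_, rfl⟩
  have hs0 : 0 < s := hs ▸ div_pos (by linarith) hp0
  have hsplit : Real.exp (a * p⁻¹) + Real.exp (b * p⁻¹)
      = Real.exp (a * p⁻¹) * (1 + Real.exp (-s)) := by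
    have hexp : a * p⁻¹ + (-s) = b * p⁻¹ := by
      rw [hs]
      field_simp
      ring
    rw [mul_add, mul_one, ← Real.exp_add, hexp]
  have hs1 : p ^ (-(3:ℝ)/4) ≤ s := by
    have h1 : p ^ ((4:ℝ)⁻¹) / p = p ^ (-(3:ℝ)/4) := by
      rw [show p ^ ((4:ℝ)⁻¹) / p = p ^ ((4:ℝ)⁻¹) / p ^ (1:ℝ) by rw [Real.rpow_one],
        ← Real.rpow_sub hp0]
      norm_num
    rw [hs, ← h1]
    gcongr
  have hs38 : p ^ (-(3:ℝ)/4) ≤ 2/5 := by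
    have h16 : (8:ℝ) ≤ p ^ ((3:ℝ)/4) := by
      have h1 : (16:ℝ) ^ ((3:ℝ)/4) ≤ p ^ ((3:ℝ)/4) :=
        Real.rpow_le_rpow (by norm_num) hp (by norm_num)
      have h2 : (16:ℝ) ^ ((3:ℝ)/4) = 8 := by
        rw [show (16:ℝ) = 2^(4:ℕ) by norm_num, ← Real.rpow_natCast 2 4,
          ← Real.rpow_mul (by norm_num)]
        rw [show ((4:ℕ):ℝ) * (3/4) = ((3:ℕ):ℝ) by push_cast; norm_num, Real.rpow_natCast]
        norm_num
      linarith
    rw [show (-(3:ℝ)/4) = -((3:ℝ)/4) by norm_num, Real.rpow_neg hp0.le]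
    calc (p ^ ((3:ℝ)/4))⁻¹ ≤ 8⁻¹ := by
          apply inv_anti₀ (by norm_num) h16
      _ ≤ 2/5 := by norm_num
  obtain ⟨s', hs'⟩ : ∃ s', s' = min s (2/5) := ⟨_, rfl⟩
  have hs'0 : 0 ≤ s' := hs' ▸ le_min hs0.le (by norm_num)
  have hs'25 : s' ≤ 2/5 := hs' ▸ min_le_right _ _
  have hkey : (1 + Real.exp (-s))/2 ≤ Real.exp (-(s'/4)) := by
    calc (1 + Real.exp (-s))/2 ≤ (1 + Real.exp (-s'))/2 := by
          have h7 := Real.exp_le_exp.mpr (neg_le_neg (hs' ▸ min_le_left s (2/5)))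
          linarith
      _ ≤ Real.exp (-(s'/4)) := one_add_exp_le hs'0 hs'25
  have hfin : ((1 + Real.exp (-s))/2) ^ p ≤ Real.exp (-(p ^ ((4:ℝ)⁻¹))/4) := by
    have hsp : p ^ ((4:ℝ)⁻¹) ≤ s' * p := by
      have h1 : p ^ (-(3:ℝ)/4) * p = p ^ ((4:ℝ)⁻¹) := by
        rw [show p ^ (-(3:ℝ)/4) * p = p ^ (-(3:ℝ)/4) * p ^ (1:ℝ) by rw [Real.rpow_one],
          ← Real.rpow_add hp0]
        norm_num
      have h2 : p ^ (-(3:ℝ)/4) ≤ s' := hs' ▸ le_min hs1 hs38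
      calc p ^ ((4:ℝ)⁻¹) = p ^ (-(3:ℝ)/4) * p := h1.symm
        _ ≤ s' * p := mul_le_mul_of_nonneg_right h2 hp0.le
    calc ((1 + Real.exp (-s))/2) ^ p ≤ (Real.exp (-(s'/4))) ^ p :=
          Real.rpow_le_rpow (by positivity) hkey hp0.le
      _ = Real.exp (-(s'/4) * p) := (Real.exp_mul _ _).symm
      _ ≤ Real.exp (-(p ^ ((4:ℝ)⁻¹))/4) := Real.exp_le_exp.mpr (by linarith)
  have hLHS : ((Real.exp (a * p⁻¹) + Real.exp (b * p⁻¹)) / 2) ^ p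
      = Real.exp a * ((1 + Real.exp (-s))/2) ^ p := by
    rw [hsplit, show Real.exp (a * p⁻¹) * (1 + Real.exp (-s)) / 2
          = Real.exp (a * p⁻¹) * ((1 + Real.exp (-s))/2) by ring,
      Real.mul_rpow (Real.exp_pos _).le (by positivity), ← Real.exp_mul]
    congr 2
    field_simp
  rw [hLHS]
  exact mul_le_mul_of_nonneg_left hfin (Real.exp_pos _).le

/-- The key power-mean estimate (case `v ≤ u`). -/
lemma powerMean_le_aux {R p u v : ℝ} (hR : 1 ≤ R) (hp : 16 ≤ p)
    (hu0 : 0 ≤ u) (huR : u ≤ R) (hv0 : 0 ≤ v) (hvR : v ≤ R) (hvu : v ≤ u) :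
    ((u ^ p⁻¹ + v ^ p⁻¹) / 2) ^ p ≤ (u * v) ^ ((2:ℝ)⁻¹) + errTerm R p := by
  have hp0 : (0:ℝ) < p := by linarith
  have hp1 : (1:ℝ) ≤ p := by linarith
  rcases eq_or_lt_of_le hv0 with hv | hv
  · -- v = 0
    have hv' : v = 0 := hv.symm
    subst hv'
    have h0 : (0:ℝ) ^ p⁻¹ = 0 := Real.zero_rpow (by positivity)
    have hLHS : ((u ^ p⁻¹ + (0:ℝ) ^ p⁻¹) / 2) ^ p = u * (2:ℝ) ^ (-p) := by
      rw [h0, add_zero, Real.div_rpow (Real.rpow_nonneg hu0 _) (by norm_num),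
        Real.rpow_inv_rpow hu0 (ne_of_gt hp0), Real.rpow_neg (by norm_num)]
      ring
    rw [hLHS]
    have h1 : u * (2:ℝ) ^ (-p) ≤ R * (2:ℝ) ^ (-p) :=
      mul_le_mul_of_nonneg_right huR (Real.rpow_nonneg (by norm_num) _)
    have h2 : (0:ℝ) ≤ (u * 0) ^ ((2:ℝ)⁻¹) := Real.rpow_nonneg (by simp) _
    have h3 := le_errTerm_two_rpow (show (0:ℝ) ≤ R by linarith) hp0.le
    linarith
  · -- 0 < v ≤ u
    have hu' : 0 < u := lt_of_lt_of_le hv hvu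
    obtain ⟨a, ha⟩ : ∃ a, a = Real.log u := ⟨_, rfl⟩
    obtain ⟨b, hb⟩ : ∃ b, b = Real.log v := ⟨_, rfl⟩
    have hue : u = Real.exp a := by rw [ha, Real.exp_log hu']
    have hve : v = Real.exp b := by rw [hb, Real.exp_log hv]
    have hba : b ≤ a := by rw [ha, hb]; exact Real.log_le_log hv hvu
    have hup : u ^ p⁻¹ = Real.exp (a * p⁻¹) := by
      rw [hue]; exact (Real.exp_mul a p⁻¹).symm
    have hvp : v ^ p⁻¹ = Real.exp (b * p⁻¹) := by
      rw [hve]; exact (Real.exp_mul b p⁻¹).symm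
    have huvhalf : Real.exp ((a + b) / 2) = (u * v) ^ ((2:ℝ)⁻¹) := by
      rw [hue, hve, ← Real.exp_add, ← Real.exp_mul]
      congr 1
    have huvR : (u * v) ^ ((2:ℝ)⁻¹) ≤ R := by
      calc (u * v) ^ ((2:ℝ)⁻¹) ≤ (R * R) ^ ((2:ℝ)⁻¹) :=
            Real.rpow_le_rpow (by positivity)
              (mul_le_mul huR hvR hv0 (by linarith)) (by norm_num)
        _ = R := mul_self_rpow_half (by linarith)
    have hE2 : 0 ≤ R * Real.exp (-(p ^ ((4:ℝ)⁻¹)) / 4) := by positivity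
    have hE3 : 0 ≤ R * ((2:ℝ) ^ (-p)) := by positivity
    have hE1 : 0 ≤ R * (Real.exp (p ^ (-(2:ℝ)⁻¹)) - 1) := by
      have h9 := Real.one_le_exp (Real.rpow_nonneg hp0.le (-(2:ℝ)⁻¹))
      nlinarith
    have herr : errTerm R p = R * (Real.exp (p ^ (-(2:ℝ)⁻¹)) - 1)
        + R * Real.exp (-(p ^ ((4:ℝ)⁻¹)) / 4) + R * ((2:ℝ) ^ (-p)) := by
      unfold errTerm; ring
    rcases le_or_gt (a - b) (p ^ ((4:ℝ)⁻¹)) with hL | hL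
    · -- Regime 1
      have hcore := regime1core hp0 hp1 hba hL
      rw [hup, hvp]
      have hXR : Real.exp ((a + b) / 2) ≤ R := huvhalf ▸ huvR
      have hmul : Real.exp ((a+b)/2) * Real.exp (p ^ (-(2:ℝ)⁻¹))
          ≤ (u * v) ^ ((2:ℝ)⁻¹) + R * (Real.exp (p ^ (-(2:ℝ)⁻¹)) - 1) := by
        have h9 : Real.exp ((a+b)/2) * Real.exp (p ^ (-(2:ℝ)⁻¹))
            = Real.exp ((a+b)/2) + Real.exp ((a+b)/2) * (Real.exp (p ^ (-(2:ℝ)⁻¹)) - 1) := by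
          ring
        have h10 : 0 ≤ Real.exp (p ^ (-(2:ℝ)⁻¹)) - 1 := by
          have := Real.one_le_exp (Real.rpow_nonneg hp0.le (-(2:ℝ)⁻¹))
          linarith
        have h11 : Real.exp ((a+b)/2) * (Real.exp (p ^ (-(2:ℝ)⁻¹)) - 1)
            ≤ R * (Real.exp (p ^ (-(2:ℝ)⁻¹)) - 1) :=
          mul_le_mul_of_nonneg_right hXR h10
        rw [← huvhalf]
        linarith [h9, h11]
      rw [herr]
      linarith [hcore.trans hmul]
    · -- Regime 2
      have hcore := regime2core hp hL
      rw [hup, hvp]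
      have hua : Real.exp a = u := hue.symm
      have h12 : Real.exp a * Real.exp (-(p ^ ((4:ℝ)⁻¹)) / 4)
          ≤ R * Real.exp (-(p ^ ((4:ℝ)⁻¹)) / 4) := by
        rw [hua]
        exact mul_le_mul_of_nonneg_right huR (Real.exp_pos _).le
      have h13 : 0 ≤ (u * v) ^ ((2:ℝ)⁻¹) := Real.rpow_nonneg (by positivity) _
      rw [herr]
      linarith [hcore.trans h12]

/-- The key power-mean estimate. -/
lemma powerMean_le {R p u v : ℝ} (hR : 1 ≤ R) (hp : 16 ≤ p)
    (hu0 : 0 ≤ u) (huR : u ≤ R) (hv0 : 0 ≤ v) (hvR : v ≤ R) :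
    ((u ^ p⁻¹ + v ^ p⁻¹) / 2) ^ p ≤ (u * v) ^ ((2:ℝ)⁻¹) + errTerm R p := by
  rcases le_total v u with h | h
  · exact powerMean_le_aux hR hp hu0 huR hv0 hvR h
  · have h2 := powerMean_le_aux hR hp hv0 hvR hu0 huR h
    rw [add_comm (v ^ p⁻¹), mul_comm v u] at h2
    exact h2

section GraphAux

variable {V : Type} [Fintype V] [DecidableEq V]

lemma sgEdgeSum_nonneg {G : SimpleGraph V} {F : V → V → ℝ}
    (h : ∀ i j, G.Adj i j → 0 ≤ F i j) : 0 ≤ sgEdgeSum G F := by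
  unfold sgEdgeSum
  apply div_nonneg _ (by norm_num)
  apply Finset.sum_nonneg
  intro i _
  apply Finset.sum_nonneg
  intro j _
  split_ifs with hadj
  · exact h i j hadj
  · exact le_refl 0

lemma sgEdgeSum_mono {G : SimpleGraph V} {F F' : V → V → ℝ}
    (h : ∀ i j, G.Adj i j → F i j ≤ F' i j) : sgEdgeSum G F ≤ sgEdgeSum G F' := by
  unfold sgEdgeSum
  have h2 : (∑ i : V, ∑ j : V, if G.Adj i j then F i j else 0)
      ≤ ∑ i : V, ∑ j : V, if G.Adj i j then F' i j else 0 := by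
    apply Finset.sum_le_sum
    intro i _
    apply Finset.sum_le_sum
    intro j _
    split_ifs with hadj
    · exact h i j hadj
    · exact le_refl 0
  linarith

lemma sgEdgeSum_add {G : SimpleGraph V} (F F' : V → V → ℝ) :
    sgEdgeSum G (fun i j => F i j + F' i j) = sgEdgeSum G F + sgEdgeSum G F' := by
  unfold sgEdgeSum
  have h : ∀ i j : V, (if G.Adj i j then F i j + F' i j else 0)
      = (if G.Adj i j then F i j else 0) + (if G.Adj i j then F' i j else 0) := by
    intro i j
    split_ifs <;> simp
  simp_rw [h, Finset.sum_add_distrib]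
  ring

lemma sgEdgeSum_const_mul {G : SimpleGraph V} (c : ℝ) (F : V → V → ℝ) :
    sgEdgeSum G (fun i j => c * F i j) = c * sgEdgeSum G F := by
  unfold sgEdgeSum
  have h : ∀ i j : V, (if G.Adj i j then c * F i j else 0)
      = c * (if G.Adj i j then F i j else 0) := by
    intro i j
    split_ifs <;> simp
  simp_rw [h, ← Finset.mul_sum]
  ring

/-- Upper bound `R` for `|f i|^r` on the sphere. -/
def Rbound (μ : V → ℝ) : ℝ := 1 + ∑ i : V, (μ i)⁻¹

lemma one_le_Rbound {μ : V → ℝ} (hμ : ∀ i, 0 < μ i) : 1 ≤ Rbound μ := by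
  unfold Rbound
  have h : 0 ≤ ∑ i : V, (μ i)⁻¹ :=
    Finset.sum_nonneg fun i _ => inv_nonneg.mpr (hμ i).le
  linarith

lemma pSphere_rpow_le {μ : V → ℝ} (hμ : ∀ i, 0 < μ i) {r : ℝ} {f : V → ℝ}
    (hf : f ∈ pSphere μ r) (i : V) : |f i| ^ r ≤ Rbound μ := by
  have hf' : (∑ j : V, μ j * |f j| ^ r) = 1 := hf
  have h1 : μ i * |f i| ^ r ≤ 1 := by
    rw [← hf']
    exact Finset.single_le_sum (f := fun j => μ j * |f j| ^ r)
      (fun j _ => mul_nonneg (hμ j).le (Real.rpow_nonneg (abs_nonneg _) r))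
      (Finset.mem_univ i)
  have h2 : |f i| ^ r ≤ (μ i)⁻¹ := by
    rw [← one_div]
    exact (le_div_iff₀' (hμ i)).mpr h1
  have h3 : (μ i)⁻¹ ≤ Rbound μ := by
    unfold Rbound
    have h := Finset.single_le_sum (f := fun j => (μ j)⁻¹)
      (fun j _ => inv_nonneg.mpr (hμ j).le) (Finset.mem_univ i)
    linarith
  linarith

/-- Bound for the potential term. -/
def Kbound (μ κ : V → ℝ) : ℝ := ∑ i : V, |κ i| * (μ i)⁻¹

lemma Kbound_nonneg {μ κ : V → ℝ} (hμ : ∀ i, 0 < μ i) : 0 ≤ Kbound μ κ :=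
  Finset.sum_nonneg fun i _ =>
    mul_nonneg (abs_nonneg _) (inv_nonneg.mpr (hμ i).le)

lemma kappa_sum_le {μ κ : V → ℝ} (hμ : ∀ i, 0 < μ i) {r : ℝ} {f : V → ℝ}
    (hf : f ∈ pSphere μ r) :
    ∑ i : V, κ i * |f i| ^ r ≤ Kbound μ κ := by
  apply Finset.sum_le_sum
  intro i _
  have h1 : |f i| ^ r ≤ (μ i)⁻¹ := by
    have hf' : (∑ j : V, μ j * |f j| ^ r) = 1 := hf
    have h2 : μ i * |f i| ^ r ≤ 1 := by
      rw [← hf']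
      exact Finset.single_le_sum (f := fun j => μ j * |f j| ^ r)
        (fun j _ => mul_nonneg (hμ j).le (Real.rpow_nonneg (abs_nonneg _) r))
        (Finset.mem_univ i)
    rw [← one_div]
    exact (le_div_iff₀' (hμ i)).mpr h2
  calc κ i * |f i| ^ r ≤ |κ i| * |f i| ^ r :=
        mul_le_mul_of_nonneg_right (le_abs_self _) (Real.rpow_nonneg (abs_nonneg _) r)
    _ ≤ |κ i| * (μ i)⁻¹ := mul_le_mul_of_nonneg_left h1 (abs_nonneg _)

lemma neg_kappa_sum_le {μ κ : V → ℝ} (hμ : ∀ i, 0 < μ i) {r : ℝ} {f : V → ℝ}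
    (hf : f ∈ pSphere μ r) :
    -(Kbound μ κ) ≤ ∑ i : V, κ i * |f i| ^ r := by
  have h := kappa_sum_le (κ := fun i => -(κ i)) hμ hf
  unfold Kbound at h ⊢
  simp only [neg_mul, abs_neg] at h
  have h2 : (∑ i : V, -(κ i * |f i| ^ r)) = -∑ i : V, κ i * |f i| ^ r := by
    rw [Finset.sum_neg_distrib]
  rw [h2] at h
  linarith

lemma sgnRpow_mem_pSphere {μ : V → ℝ} {p q : ℝ} (hp : p ≠ 0) {g : V → ℝ}
    (hg : g ∈ pSphere μ q) : (fun i => sgnRpow (q/p) (g i)) ∈ pSphere μ p := by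
  show (∑ i : V, μ i * |sgnRpow (q/p) (g i)| ^ p) = 1
  have h : ∀ i : V, |sgnRpow (q/p) (g i)| ^ p = |g i| ^ q := fun i => by
    rw [abs_sgnRpow, ← Real.rpow_mul (abs_nonneg _), div_mul_cancel₀ _ hp]
  simp_rw [h]
  exact hg

lemma map_genusFamily {μ : V → ℝ} {p q : ℝ} (hp : 0 < p) (hq : 0 < q) {k : ℕ}
    {B : Set (V → ℝ)} (hB : B ∈ genusFamily μ q k) :
    (fun g => fun i => sgnRpow (q/p) (g i)) '' B ∈ genusFamily μ p k := by
  obtain ⟨hBs, hBc, hBsym, hBg⟩ := hB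
  have ht : 0 < q / p := div_pos hq hp
  have ht' : 0 < p / q := div_pos hp hq
  have hΦcont : Continuous (fun g : V → ℝ => fun i => sgnRpow (q/p) (g i)) :=
    continuous_pi fun i => (continuous_sgnRpow _ ht).comp (continuous_apply i)
  have hΨcont : Continuous (fun g : V → ℝ => fun i => sgnRpow (p/q) (g i)) :=
    continuous_pi fun i => (continuous_sgnRpow _ ht').comp (continuous_apply i)
  have hcomp1 : ∀ g : V → ℝ, (fun i => sgnRpow (p/q) (sgnRpow (q/p) (g i))) = g := by
    intro g
    funext i
    rw [sgnRpow_sgnRpow _ _ ht, show q/p * (p/q) = 1 by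
      field_simp, sgnRpow_one]
  have hcomp2 : ∀ g : V → ℝ, (fun i => sgnRpow (q/p) (sgnRpow (p/q) (g i))) = g := by
    intro g
    funext i
    rw [sgnRpow_sgnRpow _ _ ht', show p/q * (q/p) = 1 by
      field_simp, sgnRpow_one]
  have himg : (fun g => fun i => sgnRpow (q/p) (g i)) '' B
      = (fun x : V → ℝ => fun i => sgnRpow (p/q) (x i)) ⁻¹' B := by
    ext x
    constructor
    · rintro ⟨g, hgB, rfl⟩
      show (fun i => sgnRpow (p/q) (sgnRpow (q/p) (g i))) ∈ B
      rw [hcomp1 g]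
      exact hgB
    · intro hx
      exact ⟨_, hx, hcomp2 x⟩
  refine ⟨?_, ?_, ?_, ?_⟩
  · rintro x ⟨g, hgB, rfl⟩
    exact sgnRpow_mem_pSphere (ne_of_gt hp) (hBs hgB)
  · rw [himg]
    exact hBc.preimage hΨcont
  · rintro x ⟨g, hgB, rfl⟩
    refine ⟨-g, hBsym g hgB, ?_⟩
    funext i
    show sgnRpow (q/p) (-(g i)) = -(sgnRpow (q/p) (g i))
    exact sgnRpow_neg _ (ne_of_gt ht) _
  · intro m hm hodd
    apply hBg m hm
    obtain ⟨h, hc, hnz, ho⟩ := hodd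
    refine ⟨h ∘ (fun g => fun i => sgnRpow (q/p) (g i)), ?_, ?_, ?_⟩
    · exact hc.comp hΦcont.continuousOn (Set.mapsTo_image _ _)
    · intro x hx
      exact hnz _ (Set.mem_image_of_mem _ hx)
    · intro x hx
      have h1 : (fun i => sgnRpow (q/p) ((-x) i)) = -(fun i => sgnRpow (q/p) (x i)) := by
        funext i
        show sgnRpow (q/p) (-(x i)) = -(sgnRpow (q/p) (x i))
        exact sgnRpow_neg _ (ne_of_gt ht) _
      show h (fun i => sgnRpow (q/p) ((-x) i)) = -(h (fun i => sgnRpow (q/p) (x i)))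
      rw [h1]
      exact ho _ (Set.mem_image_of_mem _ hx)

lemma nonempty_of_genusFamily {μ : V → ℝ} {q : ℝ} {k : ℕ} (hk : 1 ≤ k)
    {B : Set (V → ℝ)} (hB : B ∈ genusFamily μ q k) : B.Nonempty := by
  by_contra hne
  rw [Set.not_nonempty_iff_eq_empty] at hne
  subst hne
  exact hB.2.2.2 0 hk ⟨fun _ _ => 0, continuousOn_empty _, by simp, by simp⟩

end GraphAux

/-! ### Edge-level comparison lemmas -/

lemma edge1 {p q : ℝ} (hp : 0 < p) (hq : 0 < q) (A C : ℝ) :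
    (max (-(sgnRpow (p/q) A * sgnRpow (p/q) C)) 0) ^ (q/2) ≤ (|A - C| / 2) ^ p := by
  have hq0 : q ≠ 0 := ne_of_gt hq
  have ht : (p/q : ℝ) ≠ 0 := by positivity
  have h1 : -(sgnRpow (p/q) A * sgnRpow (p/q) C) = sgnRpow (p/q) (-(A*C)) := by
    rw [← sgnRpow_mul _ ht]
    exact (sgnRpow_neg _ ht _).symm
  rw [h1, max_sgnRpow _ ht, ← Real.rpow_mul (le_max_right _ _),
    show p/q * (q/2) = p/2 by field_simp]
  exact coreA hp A C

lemma edge2 {Rb p q A C : ℝ} (hRb : 1 ≤ Rb) (hq : 0 < q) (hp : 16 ≤ p)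
    (hA : |A| ^ q ≤ Rb) (hC : |C| ^ q ≤ Rb) :
    (|sgnRpow (q/p) A - sgnRpow (q/p) C| / 2) ^ p
      ≤ (max (-(A * C)) 0) ^ (q/2) + errTerm Rb p := by
  have hp0 : (0:ℝ) < p := by linarith
  have ht : (0:ℝ) < q / p := div_pos hq hp0
  have ht0 : (q/p : ℝ) ≠ 0 := ne_of_gt ht
  have habsA : |sgnRpow (q/p) A| = (|A| ^ q) ^ p⁻¹ := by
    rw [abs_sgnRpow, div_eq_mul_inv, Real.rpow_mul (abs_nonneg A)]
  have habsC : |sgnRpow (q/p) C| = (|C| ^ q) ^ p⁻¹ := by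
    rw [abs_sgnRpow, div_eq_mul_inv, Real.rpow_mul (abs_nonneg C)]
  rcases le_or_gt 0 (A * C) with hAC | hAC
  · -- same sign
    have hxy : 0 ≤ sgnRpow (q/p) A * sgnRpow (q/p) C := by
      rw [← sgnRpow_mul _ ht0]
      exact sgnRpow_nonneg _ ht0 hAC
    have h1 : |sgnRpow (q/p) A - sgnRpow (q/p) C| ≤ Rb ^ p⁻¹ := by
      refine le_trans (abs_sub_le_max_of_mul_nonneg hxy) (max_le ?_ ?_)
      · rw [habsA]
        exact Real.rpow_le_rpow (Real.rpow_nonneg (abs_nonneg _) _) hA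
          (inv_nonneg.mpr hp0.le)
      · rw [habsC]
        exact Real.rpow_le_rpow (Real.rpow_nonneg (abs_nonneg _) _) hC
          (inv_nonneg.mpr hp0.le)
    have h2 : (|sgnRpow (q/p) A - sgnRpow (q/p) C| / 2) ^ p ≤ (Rb ^ p⁻¹ / 2) ^ p :=
      Real.rpow_le_rpow (by positivity) (by linarith) hp0.le
    have h3 : (Rb ^ p⁻¹ / 2) ^ p = Rb * (2:ℝ) ^ (-p) := by
      rw [Real.div_rpow (Real.rpow_nonneg (by linarith) _) (by norm_num),
        Real.rpow_inv_rpow (by linarith) (ne_of_gt hp0), Real.rpow_neg (by norm_num)]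
      ring
    have h4 : 0 ≤ (max (-(A*C)) 0) ^ (q/2) := Real.rpow_nonneg (le_max_right _ _) _
    have h5 := le_errTerm_two_rpow (show (0:ℝ) ≤ Rb by linarith) hp0.le
    rw [h3] at h2
    linarith
  · -- opposite sign
    have hprod : sgnRpow (q/p) A * sgnRpow (q/p) C < 0 := by
      rw [← sgnRpow_mul _ ht0]
      exact sgnRpow_neg_of_neg _ hAC
    have hsub : |sgnRpow (q/p) A - sgnRpow (q/p) C|
        = (|A| ^ q) ^ p⁻¹ + (|C| ^ q) ^ p⁻¹ := by
      rw [abs_sub_eq_add_of_mul_neg hprod, habsA, habsC]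
    have hmax : (max (-(A*C)) 0) ^ (q/2) = ((|A| ^ q) * (|C| ^ q)) ^ ((2:ℝ)⁻¹) := by
      have e1 : ((|A| ^ q) * (|C| ^ q)) ^ ((2:ℝ)⁻¹) = (|A| * |C|) ^ (q * (2:ℝ)⁻¹) := by
        rw [← Real.mul_rpow (abs_nonneg A) (abs_nonneg C),
          ← Real.rpow_mul (by positivity)]
      rw [e1, max_eq_left (by linarith : (0:ℝ) ≤ -(A*C)),
        show -(A*C) = |A| * |C| by rw [← abs_mul, abs_of_neg hAC],
        show q/2 = q * (2:ℝ)⁻¹ by ring]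
    rw [hsub, hmax]
    exact powerMean_le hRb hp (Real.rpow_nonneg (abs_nonneg A) q) hA
      (Real.rpow_nonneg (abs_nonneg C) q) hC

section KeyEstimates

variable {V : Type} [Fintype V] [DecidableEq V]
variable {G : SimpleGraph V} {w sgn : V → V → ℝ} {μ κ : V → ℝ}

set_option linter.unusedSectionVars false

/-- Upper-bound key estimate: mapping a point of `S_q` to `S_p`. -/
lemma upKey (hw : ∀ i j, G.Adj i j → 0 < w i j)
    (hsgn : ∀ i j, G.Adj i j → sgn i j = 1 ∨ sgn i j = -1)
    (hμ : ∀ i, 0 < μ i)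
    {p q : ℝ} (hq : 1 ≤ q) (hp : 16 ≤ p) {g : V → ℝ} (hg : g ∈ pSphere μ q) :
    (2:ℝ) ^ (-p) * sgRayleigh G w sgn μ κ p (fun i => sgnRpow (q/p) (g i))
      ≤ cutRayleigh G w sgn μ q g + sgEdgeSum G w * errTerm (Rbound μ) p
        + (2:ℝ) ^ (-p) * Kbound μ κ := by
  have hp0 : (0:ℝ) < p := by linarith
  have hq0 : (0:ℝ) < q := by linarith
  have hfs : (∑ i : V, μ i * |sgnRpow (q/p) (g i)| ^ p) = 1 :=
    sgnRpow_mem_pSphere (ne_of_gt hp0) hg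
  have hgs : (∑ i : V, μ i * |g i| ^ q) = 1 := hg
  unfold sgRayleigh cutRayleigh
  beta_reduce
  rw [hfs, hgs, div_one, div_one]
  have hedge : (2:ℝ) ^ (-p) * sgEdgeSum G
        (fun i j => w i j * |sgnRpow (q/p) (g i) - sgn i j * sgnRpow (q/p) (g j)| ^ p)
      ≤ sgEdgeSum G (fun i j => w i j * (max (-(g i * sgn i j * g j)) 0) ^ (q/2))
        + sgEdgeSum G w * errTerm (Rbound μ) p := by
    rw [← sgEdgeSum_const_mul]
    have hmono : ∀ i j, G.Adj i j →
        (2:ℝ) ^ (-p) * (w i j * |sgnRpow (q/p) (g i) - sgn i j * sgnRpow (q/p) (g j)| ^ p)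
        ≤ w i j * (max (-(g i * sgn i j * g j)) 0) ^ (q/2)
          + w i j * errTerm (Rbound μ) p := by
      intro i j hadj
      have hsA : |g i| ^ q ≤ Rbound μ := pSphere_rpow_le hμ hg i
      have hsC : |sgn i j * g j| ^ q ≤ Rbound μ := by
        rcases hsgn i j hadj with hs | hs <;> rw [hs]
        · simpa using pSphere_rpow_le hμ hg j
        · rw [show (-1 : ℝ) * g j = -(g j) by ring, abs_neg]
          exact pSphere_rpow_le hμ hg j
      have hfsgn : sgnRpow (q/p) (g i) - sgn i j * sgnRpow (q/p) (g j)
          = sgnRpow (q/p) (g i) - sgnRpow (q/p) (sgn i j * g j) := by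
        rcases hsgn i j hadj with hs | hs <;> rw [hs]
        · simp
        · rw [show (-1 : ℝ) * g j = -(g j) by ring,
            sgnRpow_neg _ (by positivity : (q/p:ℝ) ≠ 0)]
          ring
      have hE := edge2 (one_le_Rbound hμ) hq0 hp hsA hsC
      have hAC : g i * (sgn i j * g j) = g i * sgn i j * g j := by ring
      rw [hAC] at hE
      have hscale : (2:ℝ) ^ (-p)
            * (w i j * |sgnRpow (q/p) (g i) - sgn i j * sgnRpow (q/p) (g j)| ^ p)
          = w i j * ((|sgnRpow (q/p) (g i) - sgn i j * sgnRpow (q/p) (g j)|) / 2) ^ p := by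
        rw [Real.div_rpow (abs_nonneg _) (by norm_num), Real.rpow_neg (by norm_num)]
        ring
      rw [hscale, hfsgn]
      calc w i j * (|sgnRpow (q/p) (g i) - sgnRpow (q/p) (sgn i j * g j)| / 2) ^ p
          ≤ w i j * ((max (-(g i * sgn i j * g j)) 0) ^ (q/2) + errTerm (Rbound μ) p) :=
            mul_le_mul_of_nonneg_left hE (hw i j hadj).le
        _ = w i j * (max (-(g i * sgn i j * g j)) 0) ^ (q/2)
            + w i j * errTerm (Rbound μ) p := by ring
    calc sgEdgeSum G (fun i j => (2:ℝ)^(-p)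
          * (w i j * |sgnRpow (q/p) (g i) - sgn i j * sgnRpow (q/p) (g j)| ^ p))
        ≤ sgEdgeSum G (fun i j => w i j * (max (-(g i * sgn i j * g j)) 0) ^ (q/2)
            + w i j * errTerm (Rbound μ) p) := sgEdgeSum_mono hmono
      _ = sgEdgeSum G (fun i j => w i j * (max (-(g i * sgn i j * g j)) 0) ^ (q/2))
          + sgEdgeSum G w * errTerm (Rbound μ) p := by
          rw [sgEdgeSum_add]
          congr 1
          rw [show (fun i j => w i j * errTerm (Rbound μ) p)
              = fun i j => errTerm (Rbound μ) p * w i j by funext i j; ring,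
            sgEdgeSum_const_mul]
          ring
  have hkap : (2:ℝ) ^ (-p) * (∑ i : V, κ i * |sgnRpow (q/p) (g i)| ^ p)
      ≤ (2:ℝ)^(-p) * Kbound μ κ :=
    mul_le_mul_of_nonneg_left (kappa_sum_le hμ (sgnRpow_mem_pSphere (ne_of_gt hp0) hg))
      (Real.rpow_nonneg (by norm_num) _)
  have hdist : (2:ℝ)^(-p) * (sgEdgeSum G
        (fun i j => w i j * |sgnRpow (q/p) (g i) - sgn i j * sgnRpow (q/p) (g j)| ^ p)
        + ∑ i : V, κ i * |sgnRpow (q/p) (g i)| ^ p)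
      = (2:ℝ)^(-p) * sgEdgeSum G
        (fun i j => w i j * |sgnRpow (q/p) (g i) - sgn i j * sgnRpow (q/p) (g j)| ^ p)
        + (2:ℝ)^(-p) * (∑ i : V, κ i * |sgnRpow (q/p) (g i)| ^ p) := by ring
  rw [hdist]
  linarith

/-- Lower-bound key estimate: mapping a point of `S_p` to `S_q`. -/
lemma downKey (hw : ∀ i j, G.Adj i j → 0 < w i j)
    (hsgn : ∀ i j, G.Adj i j → sgn i j = 1 ∨ sgn i j = -1)
    (hμ : ∀ i, 0 < μ i)
    {p q : ℝ} (hq : 1 ≤ q) (hp : 1 ≤ p) {f : V → ℝ} (hf : f ∈ pSphere μ p) :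
    cutRayleigh G w sgn μ q (fun i => sgnRpow (p/q) (f i))
      ≤ (2:ℝ)^(-p) * sgRayleigh G w sgn μ κ p f + (2:ℝ)^(-p) * Kbound μ κ := by
  have hp0 : (0:ℝ) < p := by linarith
  have hq0 : (0:ℝ) < q := by linarith
  have hgs : (∑ i : V, μ i * |sgnRpow (p/q) (f i)| ^ q) = 1 :=
    sgnRpow_mem_pSphere (ne_of_gt hq0) hf
  have hfs : (∑ i : V, μ i * |f i| ^ p) = 1 := hf
  unfold cutRayleigh sgRayleigh
  beta_reduce
  rw [hgs, hfs, div_one, div_one]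
  have hedge : sgEdgeSum G (fun i j =>
        w i j * (max (-(sgnRpow (p/q) (f i) * sgn i j * sgnRpow (p/q) (f j))) 0) ^ (q/2))
      ≤ sgEdgeSum G (fun i j => (2:ℝ)^(-p) * (w i j * |f i - sgn i j * f j| ^ p)) := by
    apply sgEdgeSum_mono
    intro i j hadj
    have hCs : sgn i j * sgnRpow (p/q) (f j) = sgnRpow (p/q) (sgn i j * f j) := by
      rcases hsgn i j hadj with hs | hs <;> rw [hs]
      · simp
      · rw [show (-1:ℝ) * f j = -(f j) by ring,
          sgnRpow_neg _ (by positivity : (p/q:ℝ) ≠ 0)]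
        ring
    have hE := edge1 hp0 hq0 (f i) (sgn i j * f j)
    have harr : sgnRpow (p/q) (f i) * sgn i j * sgnRpow (p/q) (f j)
        = sgnRpow (p/q) (f i) * sgnRpow (p/q) (sgn i j * f j) := by
      rw [← hCs]
      ring
    rw [harr]
    have hscale : (2:ℝ)^(-p) * (w i j * |f i - sgn i j * f j| ^ p)
        = w i j * ((|f i - sgn i j * f j|) / 2) ^ p := by
      rw [Real.div_rpow (abs_nonneg _) (by norm_num), Real.rpow_neg (by norm_num)]
      ring
    rw [hscale]
    exact mul_le_mul_of_nonneg_left hE (hw i j hadj).le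
  have h3 : sgEdgeSum G (fun i j => (2:ℝ)^(-p) * (w i j * |f i - sgn i j * f j| ^ p))
      = (2:ℝ)^(-p) * sgEdgeSum G (fun i j => w i j * |f i - sgn i j * f j| ^ p) :=
    sgEdgeSum_const_mul _ _
  rw [h3] at hedge
  have hkap := neg_kappa_sum_le (κ := κ) hμ hf
  have hkap2 : (2:ℝ)^(-p) * (-(Kbound μ κ)) ≤ (2:ℝ)^(-p) * (∑ i : V, κ i * |f i| ^ p) :=
    mul_le_mul_of_nonneg_left hkap (Real.rpow_nonneg (by norm_num) _)
  have hdist : (2:ℝ)^(-p) * (sgEdgeSum G (fun i j => w i j * |f i - sgn i j * f j| ^ p)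
        + ∑ i : V, κ i * |f i| ^ p)
      = (2:ℝ)^(-p) * sgEdgeSum G (fun i j => w i j * |f i - sgn i j * f j| ^ p)
        + (2:ℝ)^(-p) * (∑ i : V, κ i * |f i| ^ p) := by ring
  rw [hdist]
  have hneg : (2:ℝ)^(-p) * (-(Kbound μ κ)) = -((2:ℝ)^(-p) * Kbound μ κ) := by ring
  rw [hneg] at hkap2
  linarith

end KeyEstimates

section Bounds

variable {V : Type} [Fintype V] [DecidableEq V]
variable {G : SimpleGraph V} {w sgn : V → V → ℝ} {μ κ : V → ℝ}

set_option linter.unusedSectionVars false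

lemma cut_nonneg (hw : ∀ i j, G.Adj i j → 0 < w i j)
    {q : ℝ} {g : V → ℝ} (hg : g ∈ pSphere μ q) :
    0 ≤ cutRayleigh G w sgn μ q g := by
  have hgs : (∑ i : V, μ i * |g i| ^ q) = 1 := hg
  unfold cutRayleigh
  rw [hgs, div_one]
  exact sgEdgeSum_nonneg fun i j hadj =>
    mul_nonneg (hw i j hadj).le (Real.rpow_nonneg (le_max_right _ _) _)

lemma cut_le_bound (hw : ∀ i j, G.Adj i j → 0 < w i j)
    (hsgn : ∀ i j, G.Adj i j → sgn i j = 1 ∨ sgn i j = -1)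
    (hμ : ∀ i, 0 < μ i)
    {q : ℝ} (hq : 1 ≤ q) {g : V → ℝ} (hg : g ∈ pSphere μ q) :
    cutRayleigh G w sgn μ q g ≤ sgEdgeSum G w * Rbound μ := by
  have hq0 : (0:ℝ) < q := by linarith
  have hgs : (∑ i : V, μ i * |g i| ^ q) = 1 := hg
  unfold cutRayleigh
  rw [hgs, div_one]
  have hR1 := one_le_Rbound (μ := μ) hμ
  have hmono : ∀ i j, G.Adj i j → w i j * (max (-(g i * sgn i j * g j)) 0) ^ (q/2)
      ≤ Rbound μ * w i j := by
    intro i j hadj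
    have habs : |g i * sgn i j * g j| = |g i| * |g j| := by
      rcases hsgn i j hadj with hs | hs <;> rw [hs] <;> simp [abs_mul] <;> ring
    have h1 : max (-(g i * sgn i j * g j)) 0 ≤ |g i| * |g j| :=
      max_le (le_trans (neg_le_abs _) habs.le) (by positivity)
    have h2 : (max (-(g i * sgn i j * g j)) 0) ^ (q/2) ≤ (|g i| * |g j|) ^ (q/2) :=
      Real.rpow_le_rpow (le_max_right _ _) h1 (by positivity)
    have h3 : (|g i| * |g j|) ^ (q/2) = ((|g i| ^ q) * (|g j| ^ q)) ^ ((2:ℝ)⁻¹) := by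
      rw [show q/2 = q * (2:ℝ)⁻¹ by ring,
        Real.rpow_mul (by positivity : (0:ℝ) ≤ |g i| * |g j|),
        Real.mul_rpow (abs_nonneg _) (abs_nonneg _)]
    have h4 : ((|g i| ^ q) * (|g j| ^ q)) ^ ((2:ℝ)⁻¹)
        ≤ (Rbound μ * Rbound μ) ^ ((2:ℝ)⁻¹) :=
      Real.rpow_le_rpow (by positivity)
        (mul_le_mul (pSphere_rpow_le hμ hg i) (pSphere_rpow_le hμ hg j)
          (Real.rpow_nonneg (abs_nonneg _) _) (by linarith)) (by norm_num)
    have h5 : (Rbound μ * Rbound μ) ^ ((2:ℝ)⁻¹) = Rbound μ :=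
      mul_self_rpow_half (by linarith)
    calc w i j * (max (-(g i * sgn i j * g j)) 0) ^ (q/2)
        ≤ w i j * Rbound μ := by
          apply mul_le_mul_of_nonneg_left _ (hw i j hadj).le
          rw [h3] at h2
          rw [← h5]
          exact h2.trans h4
      _ = Rbound μ * w i j := by ring
  calc sgEdgeSum G (fun i j => w i j * (max (-(g i * sgn i j * g j)) 0) ^ (q/2))
      ≤ sgEdgeSum G (fun i j => Rbound μ * w i j) := sgEdgeSum_mono hmono
    _ = Rbound μ * sgEdgeSum G w := sgEdgeSum_const_mul _ _
    _ = sgEdgeSum G w * Rbound μ := by ring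

lemma ray_lower (hw : ∀ i j, G.Adj i j → 0 < w i j) (hμ : ∀ i, 0 < μ i)
    {p : ℝ} {f : V → ℝ} (hf : f ∈ pSphere μ p) :
    -(Kbound μ κ) ≤ sgRayleigh G w sgn μ κ p f := by
  have hfs : (∑ i : V, μ i * |f i| ^ p) = 1 := hf
  unfold sgRayleigh
  rw [hfs, div_one]
  have h1 : 0 ≤ sgEdgeSum G (fun i j => w i j * |f i - sgn i j * f j| ^ p) :=
    sgEdgeSum_nonneg fun i j hadj =>
      mul_nonneg (hw i j hadj).le (Real.rpow_nonneg (abs_nonneg _) _)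
  linarith [neg_kappa_sum_le (κ := κ) hμ hf]

lemma ray_upper (hw : ∀ i j, G.Adj i j → 0 < w i j)
    (hsgn : ∀ i j, G.Adj i j → sgn i j = 1 ∨ sgn i j = -1)
    (hμ : ∀ i, 0 < μ i)
    {p : ℝ} (hp : 1 ≤ p) {f : V → ℝ} (hf : f ∈ pSphere μ p) :
    sgRayleigh G w sgn μ κ p f ≤ sgEdgeSum G w * ((2:ℝ)^p * Rbound μ) + Kbound μ κ := by
  have hp0 : (0:ℝ) < p := by linarith
  have hfs : (∑ i : V, μ i * |f i| ^ p) = 1 := hf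
  have hR1 := one_le_Rbound (μ := μ) hμ
  unfold sgRayleigh
  rw [hfs, div_one]
  have habsle : ∀ i : V, |f i| ≤ (Rbound μ) ^ p⁻¹ := by
    intro i
    have h1 : |f i| = (|f i| ^ p) ^ p⁻¹ := (Real.rpow_rpow_inv (abs_nonneg _) (ne_of_gt hp0)).symm
    rw [h1]
    exact Real.rpow_le_rpow (Real.rpow_nonneg (abs_nonneg _) _)
      (pSphere_rpow_le hμ hf i) (inv_nonneg.mpr hp0.le)
  have hmono : ∀ i j, G.Adj i j → w i j * |f i - sgn i j * f j| ^ p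
      ≤ ((2:ℝ)^p * Rbound μ) * w i j := by
    intro i j hadj
    have habs2 : |sgn i j * f j| = |f j| := by
      rcases hsgn i j hadj with hs | hs <;> rw [hs] <;> simp
    have h1 : |f i - sgn i j * f j| ≤ 2 * (Rbound μ) ^ p⁻¹ := by
      calc |f i - sgn i j * f j| ≤ |f i| + |sgn i j * f j| := by
            rw [sub_eq_add_neg]
            refine (abs_add_le _ _).trans ?_
            rw [abs_neg]
        _ = |f i| + |f j| := by rw [habs2]
        _ ≤ 2 * (Rbound μ) ^ p⁻¹ := by linarith [habsle i, habsle j]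
    have h2 : |f i - sgn i j * f j| ^ p ≤ (2 * (Rbound μ) ^ p⁻¹) ^ p :=
      Real.rpow_le_rpow (abs_nonneg _) h1 hp0.le
    have h3 : (2 * (Rbound μ) ^ p⁻¹) ^ p = (2:ℝ)^p * Rbound μ := by
      rw [Real.mul_rpow (by norm_num) (Real.rpow_nonneg (by linarith) _),
        Real.rpow_inv_rpow (by linarith) (ne_of_gt hp0)]
    calc w i j * |f i - sgn i j * f j| ^ p
        ≤ w i j * ((2:ℝ)^p * Rbound μ) := by
          apply mul_le_mul_of_nonneg_left _ (hw i j hadj).le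
          rw [← h3]
          exact h2
      _ = ((2:ℝ)^p * Rbound μ) * w i j := by ring
  have hk := kappa_sum_le (κ := κ) hμ hf
  calc sgEdgeSum G (fun i j => w i j * |f i - sgn i j * f j| ^ p)
        + ∑ i : V, κ i * |f i| ^ p
      ≤ sgEdgeSum G (fun i j => ((2:ℝ)^p * Rbound μ) * w i j) + Kbound μ κ := by
        have := sgEdgeSum_mono (G := G) hmono
        linarith
    _ = sgEdgeSum G w * ((2:ℝ)^p * Rbound μ) + Kbound μ κ := by
        rw [sgEdgeSum_const_mul]
        ring

lemma bddAbove_ray_image (hw : ∀ i j, G.Adj i j → 0 < w i j)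
    (hsgn : ∀ i j, G.Adj i j → sgn i j = 1 ∨ sgn i j = -1)
    (hμ : ∀ i, 0 < μ i)
    {p : ℝ} (hp : 1 ≤ p) {B : Set (V → ℝ)} (hB : B ⊆ pSphere μ p) :
    BddAbove (sgRayleigh G w sgn μ κ p '' B) := by
  refine ⟨sgEdgeSum G w * ((2:ℝ)^p * Rbound μ) + Kbound μ κ, ?_⟩
  rintro y ⟨f, hfB, rfl⟩
  exact ray_upper hw hsgn hμ hp (hB hfB)

lemma bddAbove_cut_image (hw : ∀ i j, G.Adj i j → 0 < w i j)
    (hsgn : ∀ i j, G.Adj i j → sgn i j = 1 ∨ sgn i j = -1)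
    (hμ : ∀ i, 0 < μ i)
    {q : ℝ} (hq : 1 ≤ q) {B : Set (V → ℝ)} (hB : B ⊆ pSphere μ q) :
    BddAbove (cutRayleigh G w sgn μ q '' B) := by
  refine ⟨sgEdgeSum G w * Rbound μ, ?_⟩
  rintro y ⟨g, hgB, rfl⟩
  exact cut_le_bound hw hsgn hμ hq (hB hgB)

lemma sSup_ray_lower (hw : ∀ i j, G.Adj i j → 0 < w i j)
    (hsgn : ∀ i j, G.Adj i j → sgn i j = 1 ∨ sgn i j = -1)
    (hμ : ∀ i, 0 < μ i) {k : ℕ} (hk : 1 ≤ k)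
    {p : ℝ} (hp : 1 ≤ p) {B : Set (V → ℝ)} (hB : B ∈ genusFamily μ p k) :
    -(Kbound μ κ) ≤ sSup (sgRayleigh G w sgn μ κ p '' B) := by
  obtain ⟨f, hfB⟩ := nonempty_of_genusFamily hk hB
  calc -(Kbound μ κ) ≤ sgRayleigh G w sgn μ κ p f := ray_lower hw hμ (hB.1 hfB)
    _ ≤ sSup (sgRayleigh G w sgn μ κ p '' B) :=
        le_csSup (bddAbove_ray_image hw hsgn hμ hp hB.1) (Set.mem_image_of_mem _ hfB)

lemma sSup_cut_nonneg (hw : ∀ i j, G.Adj i j → 0 < w i j)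
    (hsgn : ∀ i j, G.Adj i j → sgn i j = 1 ∨ sgn i j = -1)
    (hμ : ∀ i, 0 < μ i) {k : ℕ} (hk : 1 ≤ k)
    {q : ℝ} (hq : 1 ≤ q) {B : Set (V → ℝ)} (hB : B ∈ genusFamily μ q k) :
    0 ≤ sSup (cutRayleigh G w sgn μ q '' B) := by
  obtain ⟨g, hgB⟩ := nonempty_of_genusFamily hk hB
  calc (0:ℝ) ≤ cutRayleigh G w sgn μ q g := cut_nonneg hw (hB.1 hgB)
    _ ≤ sSup (cutRayleigh G w sgn μ q '' B) :=
        le_csSup (bddAbove_cut_image hw hsgn hμ hq hB.1) (Set.mem_image_of_mem _ hgB)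

lemma bddBelow_family_ray (hw : ∀ i j, G.Adj i j → 0 < w i j)
    (hsgn : ∀ i j, G.Adj i j → sgn i j = 1 ∨ sgn i j = -1)
    (hμ : ∀ i, 0 < μ i) {k : ℕ} (hk : 1 ≤ k) {p : ℝ} (hp : 1 ≤ p) :
    BddBelow ((fun B => sSup (sgRayleigh G w sgn μ κ p '' B)) '' genusFamily μ p k) := by
  refine ⟨-(Kbound μ κ), ?_⟩
  rintro y ⟨B, hB, rfl⟩
  exact sSup_ray_lower hw hsgn hμ hk hp hB

lemma bddBelow_family_cut (hw : ∀ i j, G.Adj i j → 0 < w i j)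
    (hsgn : ∀ i j, G.Adj i j → sgn i j = 1 ∨ sgn i j = -1)
    (hμ : ∀ i, 0 < μ i) {k : ℕ} (hk : 1 ≤ k) {q : ℝ} (hq : 1 ≤ q) :
    BddBelow ((fun B => sSup (cutRayleigh G w sgn μ q '' B)) '' genusFamily μ q k) := by
  refine ⟨0, ?_⟩
  rintro y ⟨B, hB, rfl⟩
  exact sSup_cut_nonneg hw hsgn hμ hk hq hB

lemma varEig_lower (hw : ∀ i j, G.Adj i j → 0 < w i j)
    (hsgn : ∀ i j, G.Adj i j → sgn i j = 1 ∨ sgn i j = -1)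
    (hμ : ∀ i, 0 < μ i) {k : ℕ} (hk : 1 ≤ k) {p : ℝ} (hp : 1 ≤ p)
    (hfam : (genusFamily μ p k).Nonempty) :
    -(Kbound μ κ) ≤ varEig G w sgn μ κ p k := by
  unfold varEig
  apply le_csInf (hfam.image _)
  rintro y ⟨B, hB, rfl⟩
  exact sSup_ray_lower hw hsgn hμ hk hp hB

end Bounds


set_option linter.unusedSectionVars false in
set_option maxHeartbeats 1000000 in
/-- **Variational characterization of the cut-off adjacency eigenvalues**
(Theorem `thm:varitional`). For every `q ≥ 1` and `1 ≤ k ≤ n`,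
`L_k(Γ) = lim_{p→∞} 2^{-p} λ_k^{(p)}(Γ)` exists and equals
`min_{B ∈ F_k(S_q)} max_{g ∈ B} R^σ_{q,∞}(g)`. -/
theorem cutoff_eigenvalue_variational
    {V : Type} [Fintype V] [DecidableEq V] (n : ℕ) (hn : Fintype.card V = n)
    (G : SimpleGraph V) (w sgn : V → V → ℝ) (μ κ : V → ℝ)
    (hw : ∀ i j, G.Adj i j → 0 < w i j) (hwsymm : ∀ i j, w i j = w j i)
    (hsgn : ∀ i j, G.Adj i j → sgn i j = 1 ∨ sgn i j = -1)
    (hsgnsymm : ∀ i j, sgn i j = sgn j i)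
    (hμ : ∀ i, 0 < μ i)
    (q : ℝ) (hq : 1 ≤ q) (k : ℕ) (hk1 : 1 ≤ k) (hkn : k ≤ n) :
    Tendsto (fun p : ℝ => (2 : ℝ) ^ (-p) * varEig G w sgn μ κ p k) atTop
      (𝓝 (sInf ((fun B => sSup (cutRayleigh G w sgn μ q '' B)) '' genusFamily μ q k))) := by
  have hq0 : (0:ℝ) < q := by linarith
  by_cases hfam : (genusFamily μ q k).Nonempty
  swap
  · -- the genus family is empty for every exponent, both sides vanish
    have hempty : genusFamily μ q k = ∅ := Set.not_nonempty_iff_eq_empty.mp hfam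
    have hC0 : sInf ((fun B => sSup (cutRayleigh G w sgn μ q '' B))
        '' genusFamily μ q k) = 0 := by
      rw [hempty, Set.image_empty, Real.sInf_empty]
    rw [hC0]
    have hev : ∀ᶠ p : ℝ in atTop, (0:ℝ) = (2:ℝ)^(-p) * varEig G w sgn μ κ p k := by
      filter_upwards [eventually_ge_atTop (1:ℝ)] with p hp1
      have hempty' : genusFamily μ p k = ∅ := by
        rw [Set.eq_empty_iff_forall_notMem]
        intro B hB
        have h2 := map_genusFamily (p := q) (q := p) hq0 (by linarith) hB
        rw [hempty] at h2
        exact h2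
      unfold varEig
      rw [hempty', Set.image_empty, Real.sInf_empty, mul_zero]
    exact Tendsto.congr' hev tendsto_const_nhds
  · obtain ⟨C, hCdef⟩ : ∃ C, C = sInf ((fun B => sSup (cutRayleigh G w sgn μ q '' B))
        '' genusFamily μ q k) := ⟨_, rfl⟩
    rw [← hCdef]
    have hK0 := Kbound_nonneg (μ := μ) (κ := κ) hμ
    have hR1 := one_le_Rbound (μ := μ) hμ
    have hW0 : 0 ≤ sgEdgeSum G w := sgEdgeSum_nonneg fun i j h => (hw i j h).le
    -- Upper estimate, eventually in `p`
    have hupper : ∀ᶠ p : ℝ in atTop,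
        (2:ℝ)^(-p) * varEig G w sgn μ κ p k
          ≤ C + (sgEdgeSum G w * errTerm (Rbound μ) p + (2:ℝ)^(-p) * Kbound μ κ) := by
      filter_upwards [eventually_ge_atTop (16:ℝ)] with p hp16
      have hp0 : (0:ℝ) < p := by linarith
      have hp1 : (1:ℝ) ≤ p := by linarith
      have h2p : (0:ℝ) < (2:ℝ)^p := Real.rpow_pos_of_pos (by norm_num) p
      have hinv : (2:ℝ)^(-p) = ((2:ℝ)^p)⁻¹ := Real.rpow_neg (by norm_num) p
      have h6 : (2:ℝ)^(-p) * (2:ℝ)^p = 1 := by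
        rw [hinv]
        field_simp
      obtain ⟨Ep, hEp⟩ : ∃ Ep, Ep = sgEdgeSum G w * errTerm (Rbound μ) p
          + (2:ℝ)^(-p) * Kbound μ κ := ⟨_, rfl⟩
      have hEnn : 0 ≤ Ep := by
        rw [hEp]
        have h1 := errTerm_nonneg (R := Rbound μ) (p := p) (by linarith) hp0.le
        have h2 : (0:ℝ) ≤ (2:ℝ)^(-p) := Real.rpow_nonneg (by norm_num) _
        nlinarith
      rw [← hEp]
      apply le_of_forall_pos_le_add
      intro ε hε
      have hlt : sInf ((fun B => sSup (cutRayleigh G w sgn μ q '' B))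
          '' genusFamily μ q k) < C + ε := by
        rw [← hCdef]
        exact lt_add_of_pos_right C hε
      obtain ⟨y, hymem, hylt⟩ := exists_lt_of_csInf_lt (hfam.image _) hlt
      obtain ⟨B, hB, rfl⟩ := hymem
      obtain ⟨S, hS⟩ : ∃ S, S = sSup (cutRayleigh G w sgn μ q '' B) := ⟨_, rfl⟩
      have hylt2 : S < C + ε := by
        rw [hS]
        exact hylt
      clear hylt
      have hSnn : 0 ≤ S := hS ▸ sSup_cut_nonneg hw hsgn hμ hk1 hq hB
      have hBp := map_genusFamily (p := p) (q := q) hp0 hq0 hB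
      have h1 : varEig G w sgn μ κ p k
          ≤ sSup (sgRayleigh G w sgn μ κ p
            '' ((fun g => fun i => sgnRpow (q/p) (g i)) '' B)) := by
        unfold varEig
        exact csInf_le (bddBelow_family_ray hw hsgn hμ hk1 hp1)
          (Set.mem_image_of_mem _ hBp)
      have h2 : sSup (sgRayleigh G w sgn μ κ p
            '' ((fun g => fun i => sgnRpow (q/p) (g i)) '' B))
          ≤ (2:ℝ)^p * (S + Ep) := by
        apply Real.sSup_le
        · rintro y ⟨f, ⟨g, hgB, rfl⟩, rfl⟩
          have hup := upKey (κ := κ) hw hsgn hμ hq hp16 (hB.1 hgB)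
          have h3 : cutRayleigh G w sgn μ q g ≤ S := by
            rw [hS]
            exact le_csSup (bddAbove_cut_image hw hsgn hμ hq hB.1)
              (Set.mem_image_of_mem _ hgB)
          have h4 : (2:ℝ)^(-p) * sgRayleigh G w sgn μ κ p (fun i => sgnRpow (q/p) (g i))
              ≤ S + Ep := by
            rw [hEp]
            linarith
          calc sgRayleigh G w sgn μ κ p (fun i => sgnRpow (q/p) (g i))
              = (2:ℝ)^p * ((2:ℝ)^(-p)
                * sgRayleigh G w sgn μ κ p (fun i => sgnRpow (q/p) (g i))) := by
                rw [← mul_assoc, mul_comm ((2:ℝ)^p), h6, one_mul]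
            _ ≤ (2:ℝ)^p * (S + Ep) := mul_le_mul_of_nonneg_left h4 h2p.le
        · exact mul_nonneg h2p.le (by linarith)
      have h5 : (2:ℝ)^(-p) * varEig G w sgn μ κ p k
          ≤ (2:ℝ)^(-p) * ((2:ℝ)^p * (S + Ep)) :=
        mul_le_mul_of_nonneg_left (h1.trans h2) (Real.rpow_nonneg (by norm_num) _)
      have h7 : (2:ℝ)^(-p) * ((2:ℝ)^p * (S + Ep)) = S + Ep := by
        rw [← mul_assoc, h6, one_mul]
      rw [h7] at h5
      linarith [hylt2]
    -- Lower estimate, eventually in `p`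
    have hlower : ∀ᶠ p : ℝ in atTop,
        C - (sgEdgeSum G w * errTerm (Rbound μ) p + (2:ℝ)^(-p) * Kbound μ κ)
          ≤ (2:ℝ)^(-p) * varEig G w sgn μ κ p k := by
      filter_upwards [eventually_ge_atTop (16:ℝ)] with p hp16
      have hp0 : (0:ℝ) < p := by linarith
      have hp1 : (1:ℝ) ≤ p := by linarith
      have h2p : (0:ℝ) < (2:ℝ)^p := Real.rpow_pos_of_pos (by norm_num) p
      have hinv : (2:ℝ)^(-p) = ((2:ℝ)^p)⁻¹ := Real.rpow_neg (by norm_num) p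
      have h6 : (2:ℝ)^(-p) * (2:ℝ)^p = 1 := by
        rw [hinv]
        field_simp
      have hfamp : (genusFamily μ p k).Nonempty := by
        obtain ⟨B, hB⟩ := hfam
        exact ⟨_, map_genusFamily (p := p) (q := q) hp0 hq0 hB⟩
      have hvlow : -(Kbound μ κ) ≤ varEig G w sgn μ κ p k :=
        varEig_lower hw hsgn hμ hk1 hp1 hfamp
      have hkey : C ≤ (2:ℝ)^(-p) * varEig G w sgn μ κ p k
          + (2:ℝ)^(-p) * Kbound μ κ := by
        apply le_of_forall_pos_le_add
        intro ε hε
        have hδ : (0:ℝ) < (2:ℝ)^p * ε := by positivity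
        obtain ⟨y, hymem, hylt⟩ := exists_lt_of_csInf_lt (hfamp.image _)
          (show sInf ((fun B => sSup (sgRayleigh G w sgn μ κ p '' B))
              '' genusFamily μ p k)
            < varEig G w sgn μ κ p k + (2:ℝ)^p * ε from
              lt_add_of_pos_right _ hδ)
        obtain ⟨Bp, hBp, rfl⟩ := hymem
        have hBq := map_genusFamily (p := q) (q := p) hq0 hp0 hBp
        have hCle : C ≤ sSup (cutRayleigh G w sgn μ q
            '' ((fun g => fun i => sgnRpow (p/q) (g i)) '' Bp)) := by
          rw [hCdef]
          exact csInf_le (bddBelow_family_cut hw hsgn hμ hk1 hq)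
            (Set.mem_image_of_mem _ hBq)
        have hsup : sSup (cutRayleigh G w sgn μ q
              '' ((fun g => fun i => sgnRpow (p/q) (g i)) '' Bp))
            ≤ (2:ℝ)^(-p) * (varEig G w sgn μ κ p k + (2:ℝ)^p * ε)
              + (2:ℝ)^(-p) * Kbound μ κ := by
          apply Real.sSup_le
          · rintro y ⟨gg, ⟨f, hfBp, rfl⟩, rfl⟩
            have hdown := downKey (κ := κ) hw hsgn hμ hq hp1 (hBp.1 hfBp)
            have h3 : sgRayleigh G w sgn μ κ p f
                ≤ sSup (sgRayleigh G w sgn μ κ p '' Bp) :=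
              le_csSup (bddAbove_ray_image hw hsgn hμ hp1 hBp.1)
                (Set.mem_image_of_mem _ hfBp)
            have h4 : sgRayleigh G w sgn μ κ p f
                ≤ varEig G w sgn μ κ p k + (2:ℝ)^p * ε := by linarith
            have h5 : (2:ℝ)^(-p) * sgRayleigh G w sgn μ κ p f
                ≤ (2:ℝ)^(-p) * (varEig G w sgn μ κ p k + (2:ℝ)^p * ε) :=
              mul_le_mul_of_nonneg_left h4 (Real.rpow_nonneg (by norm_num) _)
            linarith [hdown]
          · have h7 : (2:ℝ)^(-p) * (varEig G w sgn μ κ p k + (2:ℝ)^p * ε)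
                + (2:ℝ)^(-p) * Kbound μ κ
                = (2:ℝ)^(-p) * ((varEig G w sgn μ κ p k + (2:ℝ)^p * ε)
                  + Kbound μ κ) := by ring
            rw [h7]
            exact mul_nonneg (Real.rpow_nonneg (by norm_num) _) (by nlinarith)
        have h8 : (2:ℝ)^(-p) * (varEig G w sgn μ κ p k + (2:ℝ)^p * ε)
            = (2:ℝ)^(-p) * varEig G w sgn μ κ p k + ε := by
          rw [mul_add, ← mul_assoc, h6, one_mul]
        have h9 := hCle.trans hsup
        rw [h8] at h9
        linarith
      have h10 : 0 ≤ sgEdgeSum G w * errTerm (Rbound μ) p :=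
        mul_nonneg hW0 (errTerm_nonneg (by linarith) hp0.le)
      linarith
    -- limit of the error term
    have T1 : Tendsto (fun p : ℝ => (2:ℝ)^(-p)) atTop (𝓝 0) := by
      have heq : (fun p : ℝ => (2:ℝ)^(-p)) = fun p => ((2:ℝ)^p)⁻¹ := by
        funext p
        exact Real.rpow_neg (by norm_num) p
      rw [heq]
      apply Filter.Tendsto.inv_tendsto_atTop
      have hT : Tendsto (fun p : ℝ => Real.exp (Real.log 2 * p)) atTop atTop :=
        Real.tendsto_exp_atTop.comp
          ((tendsto_id (α := ℝ)).const_mul_atTop (Real.log_pos (by norm_num)))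
      exact hT.congr fun p => (Real.rpow_def_of_pos (by norm_num) p).symm
    have T2 : Tendsto (fun p : ℝ => Real.exp (p ^ (-(2:ℝ)⁻¹)) - 1) atTop (𝓝 0) := by
      have h := tendsto_rpow_neg_atTop (show (0:ℝ) < 2⁻¹ by norm_num)
      have h2 := (Real.continuous_exp.tendsto 0).comp h
      have h3 := h2.sub_const 1
      simpa [Function.comp] using h3
    have T3 : Tendsto (fun p : ℝ => Real.exp (-(p ^ ((4:ℝ)⁻¹)) / 4)) atTop (𝓝 0) := by
      have heq : (fun p : ℝ => Real.exp (-(p ^ ((4:ℝ)⁻¹)) / 4))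
          = fun p => (Real.exp (p ^ ((4:ℝ)⁻¹) / 4))⁻¹ := by
        funext p
        rw [← Real.exp_neg]
        congr 1
        ring
      rw [heq]
      apply Filter.Tendsto.inv_tendsto_atTop
      exact Real.tendsto_exp_atTop.comp
        ((tendsto_rpow_atTop (by norm_num : (0:ℝ) < (4:ℝ)⁻¹)).atTop_div_const
          (by norm_num))
    have hTerr2 : Tendsto (fun p : ℝ => errTerm (Rbound μ) p) atTop (𝓝 0) := by
      have h := ((T2.add T3).add T1).const_mul (Rbound μ)
      simpa [errTerm] using h
    have hTerr : Tendsto (fun p : ℝ => sgEdgeSum G w * errTerm (Rbound μ) p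
        + (2:ℝ)^(-p) * Kbound μ κ) atTop (𝓝 0) := by
      have h1 := hTerr2.const_mul (sgEdgeSum G w)
      have h2 := T1.mul_const (Kbound μ κ)
      have h3 := h1.add h2
      simpa using h3
    refine tendsto_of_tendsto_of_tendsto_of_le_of_le' ?_ ?_ hlower hupper
    · simpa using tendsto_const_nhds.sub hTerr
    · simpa using tendsto_const_nhds.add hTerr
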